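/- If a group G endowed with a group coarse structure 𝓔_𝓘 (for an invariant group bornology 𝓘) is maximal as a coarse space, then the set of squares {g² : g ∈ G} is bounded, i.e., {g² : g ∈ G} ∈ 𝓘. -/

import Mathlib

open Pointwise

def IsIdeal {X : Type*} (I : Set (Set X)) : Prop :=
  ∅ ∈ I ∧ (∀ A ∈ I, ∀ B : Set X, B ⊆ A → B ∈ I) ∧ (∀ A ∈ I, ∀ B ∈ I, A ∪ B ∈ I)

def IsBornology {X : Type*} (B : Set (Set X)) : Prop :=
  IsIdeal B ∧ (∀ A : Set X, A.Finite → A ∈ B) ∧ ⋃₀ B = Set.univ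

def IsGroupBornology {G : Type*} [Group G] (I : Set (Set G)) : Prop :=
  IsBornology I ∧ ∀ A ∈ I, ∀ B ∈ I, A * B⁻¹ ∈ I

def relComp {X : Type*} (ε δ : Set (X × X)) : Set (X × X) :=
  {p | ∃ y, (p.1, y) ∈ ε ∧ (y, p.2) ∈ δ}

def relInv {X : Type*} (ε : Set (X × X)) : Set (X × X) :=
  {p | (p.2, p.1) ∈ ε}

def IsBallStructure {X : Type*} (E : Set (Set (X × X))) : Prop :=
  (∀ ε ∈ E, {p : X × X | p.1 = p.2} ⊆ ε) ∧
  (∀ ε ∈ E, ∀ δ ∈ E, ∃ lam ∈ E, relComp ε (relInv δ) ⊆ lam) ∧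
  ⋃₀ E = Set.univ

def IsCoarseStructure {X : Type*} (E : Set (Set (X × X))) : Prop :=
  IsBallStructure E ∧
  ∀ ε ∈ E, ∀ δ : Set (X × X), {p : X × X | p.1 = p.2} ⊆ δ → δ ⊆ ε → δ ∈ E

def ball {X : Type*} (ε : Set (X × X)) (x : X) : Set X :=
  {y | (x, y) ∈ ε}

def IsBoundedIn {X : Type*} (E : Set (Set (X × X))) (B : Set X) : Prop :=
  B = ∅ ∨ ∃ x : X, ∃ ε ∈ E, B ⊆ ball ε x

/-- The entourage `ε_A = {(x,y) : y ∈ {x} ∪ Ax}` determined by `A ⊆ G`. -/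
def entOf {G : Type*} [Group G] (A : Set G) : Set (G × G) :=
  {p | p.2 = p.1 ∨ ∃ a ∈ A, p.2 = a * p.1}

/-- The coarse structure `𝓔_𝓘` on a group determined by a group bornology `𝓘`. -/
def EI {G : Type*} [Group G] (I : Set (Set G)) : Set (Set (G × G)) :=
  {δ | {p : G × G | p.1 = p.2} ⊆ δ ∧ ∃ A ∈ I, δ ⊆ entOf A}

def IsInvariantGroupBornology {G : Type*} [Group G] (I : Set (Set G)) : Prop :=
  IsGroupBornology I ∧ ∀ A ∈ I, {x : G | ∃ g : G, ∃ a ∈ A, x = g⁻¹ * a * g} ∈ I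



section Aux

variable {G : Type*} [Group G]

/-- Two-sided (with inversion) entourage determined by `A, B ⊆ G`. -/
def bigEnt (A B : Set G) : Set (G × G) :=
  {p | ∃ a ∈ A, ∃ b ∈ B, p.2 = a * p.1 * b ∨ p.2 = a * p.1⁻¹ * b}

/-- The enlarged coarse structure. -/
def ETwo (I : Set (Set G)) : Set (Set (G × G)) :=
  {δ | {p : G × G | p.1 = p.2} ⊆ δ ∧ ∃ A ∈ I, ∃ B ∈ I, δ ⊆ bigEnt A B}

end Aux

theorem stmt15 {G : Type*} [Group G] (𝓘 : Set (Set G))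
    (h : IsInvariantGroupBornology 𝓘)
    (hub : (Set.univ : Set G) ∉ 𝓘)
    (hmax : ∀ 𝓔' : Set (Set (G × G)), IsCoarseStructure 𝓔' → EI 𝓘 ⊂ 𝓔' →
      IsBoundedIn 𝓔' (Set.univ : Set G)) :
    {x : G | ∃ g : G, x = g ^ 2} ∈ 𝓘 := by
  obtain ⟨⟨⟨⟨hempty, hdown, hunion⟩, hfin, -⟩, hmulinv⟩, -⟩ := h
  -- closure facts
  have hinv : ∀ A ∈ 𝓘, A⁻¹ ∈ 𝓘 := by
    intro A hA
    have h1 : ({1} : Set G) ∈ 𝓘 := hfin _ (Set.finite_singleton 1)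
    have := hmulinv _ h1 _ hA
    simpa using this
  have hmul : ∀ A ∈ 𝓘, ∀ B ∈ 𝓘, A * B ∈ 𝓘 := by
    intro A hA B hB
    have := hmulinv _ hA _ (hinv _ hB)
    simpa using this
  have hone : ({1} : Set G) ∈ 𝓘 := hfin _ (Set.finite_singleton 1)
  -- the candidate entourage of inversion
  set δ₀ : Set (G × G) := {p | p.2 = p.1 ∨ p.2 = p.1⁻¹} with hδ₀
  by_cases hcase : δ₀ ∈ EI 𝓘
  · -- extract squares
    obtain ⟨-, A, hA, hsub⟩ := hcase
    have hAone : A ∪ {1} ∈ 𝓘 := hunion _ hA _ hone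
    refine hdown _ hAone _ ?_
    rintro x ⟨g, rfl⟩
    have hmem : ((g⁻¹ : G), g) ∈ δ₀ := by
      simp [hδ₀]
    rcases hsub hmem with heq | ⟨a, ha, heq⟩
    · right
      have heq' : g = g⁻¹ := heq
      simp only [Set.mem_singleton_iff, pow_two]
      exact mul_eq_one_iff_eq_inv.mpr heq'
    · left
      have heq' : g = a * g⁻¹ := heq
      have hgg : g * g = a := eq_mul_inv_iff_mul_eq.mp heq'
      rw [pow_two, hgg]; exact ha
  · -- build the larger coarse structure and contradict unboundedness
    exfalso
    have hEsub : EI 𝓘 ⊆ ETwo 𝓘 := by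
      rintro δ ⟨hid, A, hA, hsub⟩
      refine ⟨hid, A ∪ {1}, hunion _ hA _ hone, {1}, hone, ?_⟩
      rintro ⟨x, y⟩ hp
      rcases hsub hp with heq | ⟨a, ha, heq⟩
      · exact ⟨1, Or.inr rfl, 1, rfl, Or.inl (by simpa using heq)⟩
      · exact ⟨a, Or.inl ha, 1, rfl, Or.inl (by simpa using heq)⟩
    have hδ₀mem : δ₀ ∈ ETwo 𝓘 := by
      refine ⟨?_, {1}, hone, {1}, hone, ?_⟩
      · rintro ⟨x, y⟩ hp
        simp at hp
        simp [hδ₀, hp]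
      · rintro ⟨x, y⟩ hp
        rcases hp with heq | heq
        · exact ⟨1, rfl, 1, rfl, Or.inl (by simpa using heq)⟩
        · exact ⟨1, rfl, 1, rfl, Or.inr (by simpa using heq)⟩
    have hcoarse : IsCoarseStructure (ETwo 𝓘) := by
      refine ⟨⟨?_, ?_, ?_⟩, ?_⟩
      · rintro ε ⟨hid, -⟩; exact hid
      · -- composition
        rintro ε ⟨-, A, hA, B, hB, hε⟩ δ ⟨-, C, hC, D, hD, hδ⟩
        refine ⟨relComp ε (relInv δ) ∪ {p : G × G | p.1 = p.2}, ⟨Set.subset_union_right,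
          (C⁻¹ * A) ∪ ((D * B⁻¹) ∪ {1}),
          hunion _ (hmul _ (hinv _ hC) _ hA) _
            (hunion _ (hmul _ hD _ (hinv _ hB)) _ hone),
          (B * D⁻¹) ∪ ((A⁻¹ * C) ∪ {1}),
          hunion _ (hmul _ hB _ (hinv _ hD)) _
            (hunion _ (hmul _ (hinv _ hA) _ hC) _ hone), ?_⟩,
          Set.subset_union_left⟩
        rintro ⟨x, z⟩ hp
        rcases hp with ⟨y, hy1, hy2⟩ | hp
        · rcases hε hy1 with ⟨a, ha, b, hb, hy1⟩
          rcases hδ hy2 with ⟨c, hc, d, hd, hy2⟩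
          simp only [relInv, Set.mem_setOf_eq] at hy2 ⊢
          rcases hy1 with hy1 | hy1 <;> rcases hy2 with hy2 | hy2
          · refine ⟨c⁻¹ * a, Or.inl (Set.mul_mem_mul (Set.inv_mem_inv.mpr hc) ha),
              b * d⁻¹, Or.inl (Set.mul_mem_mul hb (Set.inv_mem_inv.mpr hd)), Or.inl ?_⟩
            have : c * z * d = a * x * b := by rw [← hy1, ← hy2]
            have hz : z = c⁻¹ * (a * x * b) * d⁻¹ := by rw [← this]; group
            rw [hz]; group
          · refine ⟨d * b⁻¹, Or.inr (Or.inl (Set.mul_mem_mul hd (Set.inv_mem_inv.mpr hb))),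
              a⁻¹ * c, Or.inr (Or.inl (Set.mul_mem_mul (Set.inv_mem_inv.mpr ha) hc)), Or.inr ?_⟩
            have : c * z⁻¹ * d = a * x * b := by rw [← hy1, ← hy2]
            have hz : z⁻¹ = c⁻¹ * (a * x * b) * d⁻¹ := by rw [← this]; group
            have hz2 : z = (c⁻¹ * (a * x * b) * d⁻¹)⁻¹ := by rw [← hz]; group
            rw [hz2]; group
          · refine ⟨c⁻¹ * a, Or.inl (Set.mul_mem_mul (Set.inv_mem_inv.mpr hc) ha),
              b * d⁻¹, Or.inl (Set.mul_mem_mul hb (Set.inv_mem_inv.mpr hd)), Or.inr ?_⟩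
            have : c * z * d = a * x⁻¹ * b := by rw [← hy1, ← hy2]
            have hz : z = c⁻¹ * (a * x⁻¹ * b) * d⁻¹ := by rw [← this]; group
            rw [hz]; group
          · refine ⟨d * b⁻¹, Or.inr (Or.inl (Set.mul_mem_mul hd (Set.inv_mem_inv.mpr hb))),
              a⁻¹ * c, Or.inr (Or.inl (Set.mul_mem_mul (Set.inv_mem_inv.mpr ha) hc)), Or.inl ?_⟩
            have : c * z⁻¹ * d = a * x⁻¹ * b := by rw [← hy1, ← hy2]
            have hz : z⁻¹ = c⁻¹ * (a * x⁻¹ * b) * d⁻¹ := by rw [← this]; group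
            have hz2 : z = (c⁻¹ * (a * x⁻¹ * b) * d⁻¹)⁻¹ := by rw [← hz]; group
            rw [hz2]; group
        · -- idRel case
          simp only [Set.mem_setOf_eq] at hp
          exact ⟨1, Or.inr (Or.inr rfl), 1, Or.inr (Or.inr rfl),
            Or.inl (by simp [hp])⟩
      · -- union covers
        apply Set.eq_univ_of_forall
        rintro ⟨x, y⟩
        refine ⟨{p : G × G | p.1 = p.2} ∪ {(x, y)}, ⟨Set.subset_union_left,
          {y * x⁻¹} ∪ {1}, hunion _ (hfin _ (Set.finite_singleton _)) _ hone,
          {1}, hone, ?_⟩, Or.inr rfl⟩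
        rintro ⟨u, v⟩ hp
        rcases hp with hp | hp
        · simp only [Set.mem_setOf_eq] at hp
          exact ⟨1, Or.inr rfl, 1, rfl, Or.inl (by simp [hp])⟩
        · simp only [Set.mem_singleton_iff, Prod.mk.injEq] at hp
          exact ⟨y * x⁻¹, Or.inl rfl, 1, rfl, Or.inl (by rw [hp.1, hp.2]; group)⟩
      · -- downward closure
        rintro ε ⟨-, A, hA, B, hB, hε⟩ δ hid hsub
        exact ⟨hid, A, hA, B, hB, hsub.trans hε⟩
    have hss : EI 𝓘 ⊂ ETwo 𝓘 := ⟨hEsub, fun hle => hcase (hle hδ₀mem)⟩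
    rcases hmax _ hcoarse hss with huniv | ⟨x, ε, ⟨-, A, hA, B, hB, hε⟩, hball⟩
    · exact (Set.eq_empty_iff_forall_notMem.mp huniv 1) (Set.mem_univ 1)
    · apply hub
      refine hdown _ (hunion _ (hmul _ (hmul _ hA _ (hfin {x} (Set.finite_singleton x))) _ hB)
        _ (hmul _ (hmul _ hA _ (hfin {x⁻¹} (Set.finite_singleton _))) _ hB)) _ ?_
      intro y _
      rcases hε (hball (Set.mem_univ y)) with ⟨a, ha, b, hb, hy | hy⟩
      · refine Or.inl ?_
        have hy' : y = a * x * b := hy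
        rw [hy']; exact Set.mul_mem_mul (Set.mul_mem_mul ha rfl) hb
      · refine Or.inr ?_
        have hy' : y = a * x⁻¹ * b := hy
        rw [hy']; exact Set.mul_mem_mul (Set.mul_mem_mul ha rfl) hb
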